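/- arXiv:0907.0088 — 2 statements merged into one kernel-verified Lean document; each statement's English description precedes it below -/
import Mathlib

section
/- Let G be a finite vertex-weighted graph with nonnegative weights and let I be a maximum-weight independent set of G. If I is the unique maximum-weight independent set of G, then for every nonempty independent subset J of V(G) \ I, we have w(N(J) ∩ I) > w(J). -/
open Finset

/-- `S` is an independent set of `G`: no two of its vertices are adjacent. -/
def IsIndep {V : Type*} (G : SimpleGraph V) (S : Finset V) : Prop :=
  ∀ ⦃a⦄, a ∈ S → ∀ ⦃b⦄, b ∈ S → ¬ G.Adj a b

/-- total weight of a finite vertex set -/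
noncomputable def wt {V : Type*} (w : V → ℝ) (S : Finset V) : ℝ := ∑ v ∈ S, w v

/-- `p_G(I₀) = ⋃_{x∈I₀} (N(x) \ N(I₀ \ {x}))` -/
def pset {V : Type*} [DecidableEq V] [Fintype V] (G : SimpleGraph V) [DecidableRel G.Adj]
    (I0 : Finset V) : Finset V :=
  I0.biUnion fun x => G.neighborFinset x \ (I0.erase x).biUnion (fun y => G.neighborFinset y)

/-- open neighborhood of a set: `N(J) = ⋃_{x∈J} N(x)` -/
def nset {V : Type*} [DecidableEq V] [Fintype V] (G : SimpleGraph V) [DecidableRel G.Adj]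
    (J : Finset V) : Finset V :=
  J.biUnion (fun y => G.neighborFinset y)

theorem stmt_8 {V : Type*} [Fintype V] [DecidableEq V] (G : SimpleGraph V)
    [DecidableRel G.Adj] (w : V → ℝ) (hw : ∀ v, 0 ≤ w v)
    (I : Finset V) (hI : IsIndep G I)
    (hmax : ∀ S, IsIndep G S → wt w S ≤ wt w I)
    (huniq : ∀ S, IsIndep G S → wt w S = wt w I → S = I) :
    ∀ J : Finset V, J.Nonempty → J ⊆ Finset.univ \ I → IsIndep G J →
      wt w (nset G J ∩ I) > wt w J := by
  intro J hJne hJsub hJind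
  -- J is disjoint from I
  have hJI : Disjoint J I := by
    rw [Finset.disjoint_left]
    intro a haJ haI
    have := hJsub haJ
    simp at this
    exact this haI
  set X := nset G J ∩ I with hX
  set S := (I \ X) ∪ J with hS
  have hSind : IsIndep G S := by
    intro a ha b hb hab
    rw [hS, Finset.mem_union, Finset.mem_sdiff] at ha hb
    rcases ha with ⟨haI, haX⟩ | haJ
    · rcases hb with ⟨hbI, hbX⟩ | hbJ
      · exact hI haI hbI hab
      · -- a ∈ I \ X, b ∈ J, then a ∈ N(J) ∩ I
        apply haX
        rw [hX, Finset.mem_inter]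
        refine ⟨?_, haI⟩
        rw [nset, Finset.mem_biUnion]
        exact ⟨b, hbJ, by simp [G.adj_symm hab]⟩
    · rcases hb with ⟨hbI, hbX⟩ | hbJ
      · apply hbX
        rw [hX, Finset.mem_inter]
        refine ⟨?_, hbI⟩
        rw [nset, Finset.mem_biUnion]
        exact ⟨a, haJ, by simp [hab]⟩
      · exact hJind haJ hbJ hab
  have hSne : S ≠ I := by
    intro h
    obtain ⟨j, hj⟩ := hJne
    have : j ∈ I := by
      rw [← h, hS]
      exact Finset.mem_union_right _ hj
    exact (Finset.disjoint_left.mp hJI hj) this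
  have hXI : X ⊆ I := Finset.inter_subset_right
  have hdisj : Disjoint (I \ X) J := Finset.disjoint_of_subset_left (Finset.sdiff_subset) hJI.symm
  have hwS : wt w S = wt w I - wt w X + wt w J := by
    rw [hS, wt, Finset.sum_union hdisj, Finset.sum_sdiff_eq_sub hXI]
    rfl
  have hlt : wt w S < wt w I := by
    rcases lt_or_eq_of_le (hmax S hSind) with h | h
    · exact h
    · exact absurd (huniq S hSind h) hSne
  rw [hwS] at hlt
  linarith
end

section
/- Let G be a finite vertex-weighted graph with maximum independent-set weight α(G). Construct H from G by adding a set I of k+1 new vertices and a set R of 2 new vertices, all of weight 1, where every vertex of I is adjacent to every vertex of V(G) ∪ R, the two vertices of R are adjacent to each other, and there are no other new edges. Then the maximum weight of an independent set of H equals max(k, α(G)) + 1, and H has a unique maximum-weight independent set if and only if α(G) < k. -/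
open Finset

/-- `G` plus a set `I` of `k+1` new vertices and a set `R` of 2 new vertices:
every vertex of `I` is joined to every vertex of `V(G) ∪ R`, the two vertices of `R`
are joined to each other, and there are no other new edges. -/
def addIR {V : Type*} (G : SimpleGraph V) (k : ℕ) : SimpleGraph (V ⊕ (Fin (k + 1) ⊕ Fin 2)) :=
  SimpleGraph.fromRel (fun a b =>
    match a, b with
    | Sum.inl x, Sum.inl y => G.Adj x y
    | Sum.inr (Sum.inl _), Sum.inl _ => True
    | Sum.inr (Sum.inl _), Sum.inr (Sum.inr _) => True
    | Sum.inr (Sum.inr _), Sum.inr (Sum.inr _) => True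
    | _, _ => False)

section aux
variable {V : Type*} {G : SimpleGraph V} {k : ℕ}

lemma adj_VV {x y : V} : (addIR G k).Adj (Sum.inl x) (Sum.inl y) ↔ G.Adj x y := by
  constructor
  · rintro ⟨_, h | h⟩
    · exact h
    · exact h.symm
  · intro h
    exact ⟨by simp [G.ne_of_adj h], Or.inl h⟩

lemma adj_VI {x : V} {i : Fin (k+1)} : (addIR G k).Adj (Sum.inl x) (Sum.inr (Sum.inl i)) :=
  ⟨by simp, Or.inr trivial⟩

lemma adj_IR {i : Fin (k+1)} {r : Fin 2} :
    (addIR G k).Adj (Sum.inr (Sum.inl i)) (Sum.inr (Sum.inr r)) :=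
  ⟨by simp, Or.inl trivial⟩

lemma not_adj_II {i j : Fin (k+1)} :
    ¬ (addIR G k).Adj (Sum.inr (Sum.inl i)) (Sum.inr (Sum.inl j)) := by
  rintro ⟨_, h | h⟩ <;> exact h

lemma not_adj_VR {x : V} {r : Fin 2} :
    ¬ (addIR G k).Adj (Sum.inl x) (Sum.inr (Sum.inr r)) := by
  rintro ⟨_, h | h⟩ <;> exact h

lemma adj_RR {r r' : Fin 2} :
    (addIR G k).Adj (Sum.inr (Sum.inr r)) (Sum.inr (Sum.inr r')) ↔ r ≠ r' := by
  constructor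
  · rintro ⟨h, -⟩ hr; exact h (by rw [hr])
  · intro h; exact ⟨by simp [h], Or.inl trivial⟩

end aux

theorem stmt_13 {V : Type*} [Fintype V] [DecidableEq V] (G : SimpleGraph V)
    [DecidableRel G.Adj] (w : V → ℝ) (hw : ∀ v, 0 ≤ w v)
    (hint : ∀ v, ∃ n : ℕ, w v = n) (k : ℕ) (hk : 1 ≤ k)
    (A : Finset V) (hA : IsIndep G A) (hAmax : ∀ T, IsIndep G T → wt w T ≤ wt w A)
    (hApos : 0 < wt w A) :
    let H := addIR G k
    let wH : V ⊕ (Fin (k + 1) ⊕ Fin 2) → ℝ := Sum.elim w (fun _ => 1)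
    (∀ S : Finset (V ⊕ (Fin (k + 1) ⊕ Fin 2)), IsIndep H S → wt wH S ≤ max (k : ℝ) (wt w A) + 1) ∧
    (∃ S : Finset (V ⊕ (Fin (k + 1) ⊕ Fin 2)), IsIndep H S ∧ wt wH S = max (k : ℝ) (wt w A) + 1) ∧
    ((∃! S : Finset (V ⊕ (Fin (k + 1) ⊕ Fin 2)),
        IsIndep H S ∧ ∀ S', IsIndep H S' → wt wH S' ≤ wt wH S) ↔ wt w A < (k : ℝ)) := by
  intro H wH
  -- the weight of A is a nonnegative integer
  obtain ⟨n, hn⟩ : ∃ n : ℕ, wt w A = (n : ℝ) := by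
    refine ⟨∑ v ∈ A, (hint v).choose, ?_⟩
    rw [wt, Nat.cast_sum]
    exact Finset.sum_congr rfl fun v _ => (hint v).choose_spec
  -- splitting the weight of a set of H-vertices
  have hwt : ∀ S : Finset (V ⊕ (Fin (k + 1) ⊕ Fin 2)),
      wt wH S = wt w S.toLeft + (S.toRight.card : ℝ) := by
    intro S
    conv_lhs => rw [wt, ← Finset.toLeft_disjSum_toRight (u := S)]
    rw [Finset.sum_disjSum]
    simp [wt, wH]
  -- if S contains an I-vertex, every element of S is an I-vertex
  have hIonly : ∀ S : Finset (V ⊕ (Fin (k + 1) ⊕ Fin 2)), IsIndep H S →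
      ∀ i : Fin (k+1), Sum.inr (Sum.inl i) ∈ S →
      ∀ a ∈ S, ∃ j : Fin (k+1), a = Sum.inr (Sum.inl j) := by
    intro S hS i hi a ha
    match a with
    | Sum.inl x => exact absurd adj_VI (hS ha hi)
    | Sum.inr (Sum.inl j) => exact ⟨j, rfl⟩
    | Sum.inr (Sum.inr r) => exact absurd adj_IR (hS hi ha)
  -- bound when S contains an I-vertex
  have boundI : ∀ S : Finset (V ⊕ (Fin (k + 1) ⊕ Fin 2)), IsIndep H S →
      (∃ i : Fin (k+1), Sum.inr (Sum.inl i) ∈ S) → wt wH S ≤ (k : ℝ) + 1 := by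
    intro S hS ⟨i, hi⟩
    have h1 : S.toLeft = ∅ := by
      rw [Finset.eq_empty_iff_forall_notMem]
      intro x hx
      rw [Finset.mem_toLeft] at hx
      obtain ⟨j, hj⟩ := hIonly S hS i hi _ hx
      exact absurd hj (by simp)
    have h2 : S.toRight.toRight = ∅ := by
      rw [Finset.eq_empty_iff_forall_notMem]
      intro r hr
      rw [Finset.mem_toRight, Finset.mem_toRight] at hr
      obtain ⟨j, hj⟩ := hIonly S hS i hi _ hr
      exact absurd hj (by simp)
    have h3 : S.toRight.card ≤ k + 1 := by
      rw [← Finset.card_toLeft_add_card_toRight (u := S.toRight), h2]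
      simpa using (Finset.card_le_univ S.toRight.toLeft).trans_eq (by simp)
    rw [hwt, h1]
    simp only [wt, Finset.sum_empty, zero_add]
    exact_mod_cast h3
  -- bound when S contains no I-vertex
  have boundNoI : ∀ S : Finset (V ⊕ (Fin (k + 1) ⊕ Fin 2)), IsIndep H S →
      (∀ i : Fin (k+1), Sum.inr (Sum.inl i) ∉ S) → wt wH S ≤ wt w A + 1 := by
    intro S hS hno
    have h1 : IsIndep G S.toLeft := by
      intro a ha b hb hab
      exact hS (Finset.mem_toLeft.mp ha) (Finset.mem_toLeft.mp hb) (adj_VV.mpr hab)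
    have h2 : S.toRight.toLeft = ∅ := by
      rw [Finset.eq_empty_iff_forall_notMem]
      intro i hi
      rw [Finset.mem_toLeft, Finset.mem_toRight] at hi
      exact hno i hi
    have h3 : S.toRight.toRight.card ≤ 1 := by
      rw [Finset.card_le_one]
      intro r hr r' hr'
      rw [Finset.mem_toRight, Finset.mem_toRight] at hr hr'
      by_contra hne
      exact hS hr hr' (adj_RR.mpr hne)
    have h4 : S.toRight.card ≤ 1 := by
      rw [← Finset.card_toLeft_add_card_toRight (u := S.toRight), h2]
      simpa using h3
    have := hAmax _ h1
    rw [hwt]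
    have : (S.toRight.card : ℝ) ≤ 1 := by exact_mod_cast h4
    linarith [hAmax _ h1]
  -- Part 1
  have part1 : ∀ S : Finset (V ⊕ (Fin (k + 1) ⊕ Fin 2)), IsIndep H S →
      wt wH S ≤ max (k : ℝ) (wt w A) + 1 := by
    intro S hS
    by_cases hI : ∃ i : Fin (k+1), Sum.inr (Sum.inl i) ∈ S
    · exact (boundI S hS hI).trans (by gcongr; exact le_max_left _ _)
    · push_neg at hI
      exact (boundNoI S hS hI).trans (by gcongr; exact le_max_right _ _)
  -- the canonical big independent sets
  set SA0 : Finset (V ⊕ (Fin (k + 1) ⊕ Fin 2)) :=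
    A.disjSum {Sum.inr (0 : Fin 2)} with hSA0
  set SA1 : Finset (V ⊕ (Fin (k + 1) ⊕ Fin 2)) :=
    A.disjSum {Sum.inr (1 : Fin 2)} with hSA1
  set SI : Finset (V ⊕ (Fin (k + 1) ⊕ Fin 2)) :=
    (∅ : Finset V).disjSum ((Finset.univ : Finset (Fin (k+1))).disjSum ∅) with hSI
  have hSAindep : ∀ r : Fin 2, IsIndep H (A.disjSum {Sum.inr r}) := by
    intro r a ha b hb hab
    rw [Finset.mem_disjSum] at ha hb
    rcases ha with ⟨x, hx, rfl⟩ | ⟨y, hy, rfl⟩ <;>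
      rcases hb with ⟨x', hx', rfl⟩ | ⟨y', hy', rfl⟩
    · exact hA hx hx' (adj_VV.mp hab)
    · rw [Finset.mem_singleton] at hy'; subst hy'; exact not_adj_VR hab
    · rw [Finset.mem_singleton] at hy; subst hy; exact not_adj_VR hab.symm
    · rw [Finset.mem_singleton] at hy hy'; subst hy; subst hy'
      exact (adj_RR.mp hab) rfl
  have hSAwt : ∀ r : Fin 2, wt wH (A.disjSum {Sum.inr r}) = wt w A + 1 := by
    intro r
    rw [wt, Finset.sum_disjSum]
    simp [wt, wH]
  have hSIindep : IsIndep H SI := by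
    intro a ha b hb hab
    rw [hSI, Finset.mem_disjSum] at ha hb
    rcases ha with ⟨x, hx, rfl⟩ | ⟨y, hy, rfl⟩
    · simp at hx
    · rcases hb with ⟨x', hx', rfl⟩ | ⟨y', hy', rfl⟩
      · simp at hx'
      · rw [Finset.mem_disjSum] at hy hy'
        rcases hy with ⟨i, -, rfl⟩ | ⟨r, hr, -⟩
        · rcases hy' with ⟨i', -, rfl⟩ | ⟨r', hr', -⟩
          · exact not_adj_II hab
          · simp at hr'
        · simp at hr
  have hSIwt : wt wH SI = (k : ℝ) + 1 := by
    rw [hSI, wt, Finset.sum_disjSum, Finset.sum_disjSum]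
    simp [wH]
  -- Part 2
  have part2 : ∃ S : Finset (V ⊕ (Fin (k + 1) ⊕ Fin 2)),
      IsIndep H S ∧ wt wH S = max (k : ℝ) (wt w A) + 1 := by
    by_cases hc : (k : ℝ) ≤ wt w A
    · exact ⟨SA0, hSAindep 0, by rw [hSA0, hSAwt 0, max_eq_right hc]⟩
    · push_neg at hc
      exact ⟨SI, hSIindep, by rw [hSIwt, max_eq_left hc.le]⟩
  refine ⟨part1, part2, ?_, ?_⟩
  -- forward direction: uniqueness implies α < k
  · rintro ⟨S, -, huniq⟩
    by_contra hge
    push_neg at hge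
    have hmax : max (k : ℝ) (wt w A) = wt w A := max_eq_right hge
    have h0 : IsIndep H SA0 ∧ ∀ S', IsIndep H S' → wt wH S' ≤ wt wH SA0 := by
      exact ⟨hSAindep 0, fun S' hS' => (part1 S' hS').trans_eq (by rw [hmax, hSA0, hSAwt 0])⟩
    have h1 : IsIndep H SA1 ∧ ∀ S', IsIndep H S' → wt wH S' ≤ wt wH SA1 := by
      exact ⟨hSAindep 1, fun S' hS' => (part1 S' hS').trans_eq (by rw [hmax, hSA1, hSAwt 1])⟩
    have := (huniq SA0 h0).trans (huniq SA1 h1).symm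
    rw [hSA0, hSA1] at this
    have := (Finset.disjSum_inj.mp this).2
    rw [Finset.singleton_inj] at this
    simp at this
  -- backward direction: α < k implies uniqueness
  · intro hlt
    have hn_lt : n < k := by exact_mod_cast hn ▸ hlt
    have hα1 : wt w A + 1 ≤ (k : ℝ) := by
      rw [hn]
      exact_mod_cast hn_lt
    have hmax : max (k : ℝ) (wt w A) = (k : ℝ) := max_eq_left (by linarith)
    refine ⟨SI, ⟨hSIindep, fun S' hS' => ?_⟩, ?_⟩
    · rw [hSIwt, ← hmax]; exact part1 S' hS'
    · rintro S ⟨hS, hSmax⟩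
      have hge : (k : ℝ) + 1 ≤ wt wH S := hSIwt ▸ hSmax SI hSIindep
      have hI : ∃ i : Fin (k+1), Sum.inr (Sum.inl i) ∈ S := by
        by_contra hno
        push_neg at hno
        have := boundNoI S hS hno
        linarith
      obtain ⟨i, hi⟩ := hI
      have hsub : S ⊆ SI := by
        intro a ha
        obtain ⟨j, rfl⟩ := hIonly S hS i hi a ha
        rw [hSI, Finset.mem_disjSum]
        exact Or.inr ⟨Sum.inl j, by simp, rfl⟩
      have hwS : wt wH S = (S.card : ℝ) := by
        rw [wt]
        rw [Finset.sum_congr rfl (fun a ha => ?_), Finset.sum_const, nsmul_eq_mul, mul_one]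
        obtain ⟨j, rfl⟩ := hIonly S hS i hi a ha
        rfl
      have hcardSI : SI.card = k + 1 := by
        rw [hSI, Finset.card_disjSum, Finset.card_disjSum]
        simp
      have hcard : k + 1 ≤ S.card := by
        have : ((k : ℝ) + 1) ≤ (S.card : ℝ) := hwS ▸ hge
        exact_mod_cast this
      exact Finset.eq_of_subset_of_card_le hsub (by rw [hcardSI]; exact hcard)
end
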